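/- Let x ∈ R^d, a fixed index j sampled uniformly from {1,…,k}, a uniform random size-τm subset U of blocks independent of j, and define x⁺ = x − γ(∇φⱼ(x) − αⱼ + ᾱ)_U where ᾱ = (1/k)∑ⱼαⱼ. Assume each φⱼ is convex and L-smooth, φ = (1/k)∑ⱼφⱼ is minimized at x⋆ (so ∑ⱼ∇φⱼ(x⋆) = 0). Then E‖x⁺ − E x⁺‖² ≤ 2γ²τ(2L(φ(x) − φ(x⋆)) + (1/k)∑ⱼ‖αⱼ − ∇φⱼ(x⋆)‖²). -/

import Mathlib

open Finset
open scoped RealInnerProductSpace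

/-- `x_U`: keep the coordinates of `x` lying in blocks of `U`, zero the rest. -/
noncomputable def restr {d m : ℕ} (b : Fin d → Fin m) (U : Finset (Fin m))
    (x : EuclideanSpace ℝ (Fin d)) : EuclideanSpace ℝ (Fin d) :=
  (WithLp.equiv 2 (Fin d → ℝ)).symm (fun j => if b j ∈ U then x j else 0)

section Helpers

variable {E : Type*} [NormedAddCommGroup E] [InnerProductSpace ℝ E]

/-- Sum of squared distances from the mean is at most the sum of squared norms. -/
lemma sum_norm_sub_mean_le {ι : Type*} (s : Finset ι) (v : ι → E) :
    ∑ i ∈ s, ‖v i - (s.card : ℝ)⁻¹ • ∑ k ∈ s, v k‖ ^ 2 ≤ ∑ i ∈ s, ‖v i‖ ^ 2 := by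
  set c : ℝ := (s.card : ℝ)⁻¹ with hc
  set w : E := ∑ k ∈ s, v k with hw
  have expand : ∀ i ∈ s, ‖v i - c • w‖ ^ 2
      = ‖v i‖ ^ 2 - 2 * (c * ⟪v i, w⟫) + c ^ 2 * ‖w‖ ^ 2 := by
    intro i _
    rw [norm_sub_sq_real, real_inner_smul_right, norm_smul, mul_pow, Real.norm_eq_abs, sq_abs]
  rw [Finset.sum_congr rfl expand]
  rw [Finset.sum_add_distrib, Finset.sum_sub_distrib, ← Finset.mul_sum, ← Finset.mul_sum,
    Finset.sum_const, ← sum_inner, ← hw, real_inner_self_eq_norm_sq]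
  have hX : (0:ℝ) ≤ ‖w‖ ^ 2 := sq_nonneg _
  have hc0 : 0 ≤ c := by positivity
  rcases eq_or_ne s.card 0 with h | h
  · simp [hc, h]
  · have h1 : (s.card : ℝ) * c = 1 := by
      rw [hc]; field_simp
    have h2 : s.card • (c ^ 2 * ‖w‖ ^ 2) = c * ‖w‖ ^ 2 := by
      rw [nsmul_eq_mul]; linear_combination (c * ‖w‖ ^ 2) * h1
    rw [h2]
    nlinarith [mul_nonneg hc0 hX]

/-- The mean minimizes the sum of squared distances. -/
lemma sum_norm_sub_mean_le' {ι : Type*} (s : Finset ι) (v : ι → E) (c : E) :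
    ∑ i ∈ s, ‖v i - (s.card : ℝ)⁻¹ • ∑ k ∈ s, v k‖ ^ 2 ≤ ∑ i ∈ s, ‖v i - c‖ ^ 2 := by
  rcases eq_or_ne s.card 0 with h | h
  · rw [Finset.card_eq_zero] at h; simp [h]
  · have hmean : (s.card : ℝ)⁻¹ • ∑ k ∈ s, (v k - c)
        = ((s.card : ℝ)⁻¹ • ∑ k ∈ s, v k) - c := by
      rw [Finset.sum_sub_distrib, smul_sub, Finset.sum_const, ← Nat.cast_smul_eq_nsmul ℝ,
        smul_smul, inv_mul_cancel₀ (by exact_mod_cast h), one_smul]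
    have hmain := sum_norm_sub_mean_le s (fun i => v i - c)
    rw [hmean] at hmain
    calc ∑ i ∈ s, ‖v i - (s.card : ℝ)⁻¹ • ∑ k ∈ s, v k‖ ^ 2
        = ∑ i ∈ s, ‖(v i - c) - (((s.card : ℝ)⁻¹ • ∑ k ∈ s, v k) - c)‖ ^ 2 := by
          apply Finset.sum_congr rfl; intro i _; congr 2; abel
      _ ≤ ∑ i ∈ s, ‖v i - c‖ ^ 2 := hmain

/-- Double-sum version of the mean minimization. -/
lemma sum2_norm_sub_mean_le {ι κ : Type*} (s : Finset ι) (t : Finset κ)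
    (v : ι → κ → E) (c : E) :
    ∑ i ∈ s, ∑ j ∈ t,
        ‖v i j - ((s.card : ℝ) * (t.card : ℝ))⁻¹ • ∑ i' ∈ s, ∑ j' ∈ t, v i' j'‖ ^ 2
      ≤ ∑ i ∈ s, ∑ j ∈ t, ‖v i j - c‖ ^ 2 := by
  have h1 := sum_norm_sub_mean_le' (s ×ˢ t) (fun p => v p.1 p.2) c
  simp only [Finset.sum_product, Finset.card_product, Nat.cast_mul] at h1
  exact h1

/-- Number of `kb`-subsets of `Fin m` containing a fixed element. -/
lemma count_mem_powersetCard {m kb : ℕ} (hkb : 0 < kb) (a : Fin m) :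
    ((Finset.powersetCard kb (Finset.univ : Finset (Fin m))).filter (fun U => a ∈ U)).card
      = (m - 1).choose (kb - 1) := by
  have hcard : ((Finset.univ : Finset (Fin m)).erase a).card = m - 1 := by
    rw [Finset.card_erase_of_mem (mem_univ a), Finset.card_univ, Fintype.card_fin]
  rw [← hcard, ← Finset.card_powersetCard]
  apply Finset.card_bij (fun U _ => U.erase a)
  · intro U hU
    simp only [Finset.mem_filter, Finset.mem_powersetCard] at hU
    rw [Finset.mem_powersetCard]
    exact ⟨Finset.erase_subset_erase a (Finset.subset_univ U),
      by rw [Finset.card_erase_of_mem hU.2, hU.1.2]⟩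
  · intro U hU V hV h
    simp only [Finset.mem_filter] at hU hV
    rw [← Finset.insert_erase hU.2, ← Finset.insert_erase hV.2, h]
  · intro V hV
    rw [Finset.mem_powersetCard] at hV
    have haV : a ∉ V := fun h => (Finset.mem_erase.mp (hV.1 h)).1 rfl
    refine ⟨insert a V, ?_, by rw [Finset.erase_insert haV]⟩
    simp only [Finset.mem_filter, Finset.mem_powersetCard]
    exact ⟨⟨Finset.subset_univ _, by rw [Finset.card_insert_of_notMem haV, hV.2,
      Nat.sub_add_cancel hkb]⟩, Finset.mem_insert_self a V⟩

lemma restr_sq {d m : ℕ} (b : Fin d → Fin m) (U : Finset (Fin m))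
    (v : EuclideanSpace ℝ (Fin d)) :
    ‖restr b U v‖ ^ 2 = ∑ i, if b i ∈ U then (v i) ^ 2 else 0 := by
  rw [← real_inner_self_eq_norm_sq, PiLp.inner_apply]
  apply Finset.sum_congr rfl
  intro i _
  simp only [restr, WithLp.equiv_symm_apply, PiLp.toLp_apply, RCLike.inner_apply, conj_trivial]
  split <;> ring

lemma sum_restr_sq {d m kb : ℕ} (hkb : 0 < kb) (b : Fin d → Fin m)
    (v : EuclideanSpace ℝ (Fin d)) :
    ∑ U ∈ Finset.powersetCard kb (Finset.univ : Finset (Fin m)), ‖restr b U v‖ ^ 2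
      = ((m - 1).choose (kb - 1) : ℝ) * ‖v‖ ^ 2 := by
  calc ∑ U ∈ Finset.powersetCard kb (Finset.univ : Finset (Fin m)), ‖restr b U v‖ ^ 2
      = ∑ U ∈ Finset.powersetCard kb (Finset.univ : Finset (Fin m)),
          ∑ i, if b i ∈ U then (v i) ^ 2 else 0 :=
        Finset.sum_congr rfl fun U _ => restr_sq b U v
    _ = ∑ i, ∑ U ∈ Finset.powersetCard kb (Finset.univ : Finset (Fin m)),
          if b i ∈ U then (v i) ^ 2 else 0 := Finset.sum_comm
    _ = ∑ i, ((m - 1).choose (kb - 1) : ℝ) * (v i) ^ 2 := by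
        apply Finset.sum_congr rfl
        intro i _
        rw [← Finset.sum_filter, Finset.sum_const, ← count_mem_powersetCard hkb (b i),
          nsmul_eq_mul]
    _ = ((m - 1).choose (kb - 1) : ℝ) * ‖v‖ ^ 2 := by
        rw [← Finset.mul_sum, ← real_inner_self_eq_norm_sq, PiLp.inner_apply]
        congr 1
        apply Finset.sum_congr rfl; intro i _
        simp [RCLike.inner_apply]

/-- Standard consequence of convexity + `L`-smoothness. -/
lemma grad_sq_le {L : ℝ} (hL : 0 < L) (φ : E → ℝ) (g : E → E)
    (hc : ∀ x y : E, φ x ≥ φ y + ⟪g y, x - y⟫)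
    (hs : ∀ x y : E, φ x ≤ φ y + ⟪g y, x - y⟫ + L / 2 * ‖x - y‖ ^ 2)
    (x y : E) :
    ‖g x - g y‖ ^ 2 ≤ 2 * L * (φ x - φ y - ⟪g y, x - y⟫) := by
  set w : E := g x - g y with hw
  set z : E := x - L⁻¹ • w with hz
  have hLne : L ≠ 0 := ne_of_gt hL
  have hzx : z - x = -(L⁻¹ • w) := by rw [hz]; abel
  have hzy : z - y = (x - y) - L⁻¹ • w := by rw [hz]; abel
  have A := hc z y
  have B := hs z x
  rw [hzx] at B
  rw [hzy] at A
  rw [inner_sub_right, real_inner_smul_right] at A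
  rw [inner_neg_right, real_inner_smul_right, norm_neg, norm_smul, Real.norm_eq_abs,
    abs_of_pos (inv_pos.mpr hL), mul_pow] at B
  have key : ⟪g x, w⟫ - ⟪g y, w⟫ = ‖w‖ ^ 2 := by
    rw [← inner_sub_left, ← hw, real_inner_self_eq_norm_sq]
  have key2 : L⁻¹ * ⟪g x, w⟫ - L⁻¹ * ⟪g y, w⟫ = L⁻¹ * ‖w‖ ^ 2 := by
    rw [← mul_sub, key]
  have C : L⁻¹ * ‖w‖ ^ 2 ≤ (φ x - φ y - ⟪g y, x - y⟫) + L / 2 * (L⁻¹ ^ 2 * ‖w‖ ^ 2) := by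
    linarith
  have C2 := mul_le_mul_of_nonneg_left C (by positivity : (0:ℝ) ≤ 2 * L)
  have e1 : 2 * L * (L⁻¹ * ‖w‖ ^ 2) = 2 * ‖w‖ ^ 2 := by field_simp
  have e2 : 2 * L * ((φ x - φ y - ⟪g y, x - y⟫) + L / 2 * (L⁻¹ ^ 2 * ‖w‖ ^ 2))
      = 2 * L * (φ x - φ y - ⟪g y, x - y⟫) + ‖w‖ ^ 2 := by field_simp
  rw [e1, e2] at C2
  linarith

lemma norm_add_sq_le_two (a b : E) : ‖a + b‖ ^ 2 ≤ 2 * ‖a‖ ^ 2 + 2 * ‖b‖ ^ 2 := by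
  have h := norm_add_le a b
  have h2 : ‖a + b‖ ^ 2 ≤ (‖a‖ + ‖b‖) ^ 2 :=
    pow_le_pow_left₀ (norm_nonneg _) h 2
  nlinarith [sq_nonneg (‖a‖ - ‖b‖)]

end Helpers

/-- SAGA variance bound: with `j` uniform in `{1,…,K}`, `U` an independent uniform
size-`τm` block subset (encoded by averaging over both), and
`x⁺ = x − γ(∇φⱼ(x) − αⱼ + ᾱ)_U`, if each `φⱼ` is convex and `L`-smooth and
`φ = (1/K)∑ⱼφⱼ` is minimized at `x⋆` (so `∑ⱼ∇φⱼ(x⋆) = 0`), then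
`E‖x⁺ − E x⁺‖² ≤ 2γ²τ(2L(φ(x) − φ(x⋆)) + (1/K)∑ⱼ‖αⱼ − ∇φⱼ(x⋆)‖²)`. -/
theorem stmt12 {d m K : ℕ} (hK : 0 < K) (b : Fin d → Fin m)
    (kb : ℕ) (hkb : 0 < kb) (hkbm : kb ≤ m)
    (τ γ L : ℝ) (hτ : τ = (kb : ℝ) / m) (hγ : 0 < γ) (hL : 0 < L)
    (φ : Fin K → EuclideanSpace ℝ (Fin d) → ℝ)
    (G : Fin K → EuclideanSpace ℝ (Fin d) → EuclideanSpace ℝ (Fin d))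
    (hconv : ∀ j, ∀ x y : EuclideanSpace ℝ (Fin d),
      φ j x ≥ φ j y + ⟪G j y, x - y⟫)
    (hsmooth : ∀ j, ∀ x y : EuclideanSpace ℝ (Fin d),
      φ j x ≤ φ j y + ⟪G j y, x - y⟫ + L / 2 * ‖x - y‖ ^ 2)
    (α : Fin K → EuclideanSpace ℝ (Fin d))
    (x xstar : EuclideanSpace ℝ (Fin d))
    (hmin : ∀ z, (K : ℝ)⁻¹ * ∑ j, φ j xstar ≤ (K : ℝ)⁻¹ * ∑ j, φ j z)
    (hopt : ∑ j, G j xstar = 0) :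
    ((K : ℝ) * (m.choose kb : ℝ))⁻¹ *
      ∑ j, ∑ U ∈ Finset.powersetCard kb (Finset.univ : Finset (Fin m)),
        ‖(x - γ • restr b U (G j x - α j + (K : ℝ)⁻¹ • ∑ j', α j'))
          - ((K : ℝ) * (m.choose kb : ℝ))⁻¹ •
              ∑ j'', ∑ U' ∈ Finset.powersetCard kb (Finset.univ : Finset (Fin m)),
                (x - γ • restr b U' (G j'' x - α j'' + (K : ℝ)⁻¹ • ∑ j', α j'))‖ ^ 2
      ≤ 2 * γ ^ 2 * τ *
          (2 * L * ((K : ℝ)⁻¹ * ∑ j, φ j x - (K : ℝ)⁻¹ * ∑ j, φ j xstar)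
            + (K : ℝ)⁻¹ * ∑ j, ‖α j - G j xstar‖ ^ 2) := by
  classical
  have hm : 0 < m := lt_of_lt_of_le hkb hkbm
  have hCpos : 0 < m.choose kb := Nat.choose_pos hkbm
  have hK0 : (K : ℝ) ≠ 0 := Nat.cast_ne_zero.mpr hK.ne'
  have hm0 : (m : ℝ) ≠ 0 := Nat.cast_ne_zero.mpr hm.ne'
  have hC0 : ((m.choose kb : ℕ) : ℝ) ≠ 0 := Nat.cast_ne_zero.mpr hCpos.ne'
  set P := Finset.powersetCard kb (Finset.univ : Finset (Fin m)) with hP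
  set A : EuclideanSpace ℝ (Fin d) := (K : ℝ)⁻¹ • ∑ j', α j' with hA
  set N : ℝ := (K : ℝ) * (m.choose kb : ℝ) with hN
  have hNpos : 0 < N := by
    rw [hN]
    exact mul_pos (by exact_mod_cast hK) (by exact_mod_cast hCpos)
  -- Step 1: variance of average bounded via deviations from `x`.
  have hNeq : (((Finset.univ : Finset (Fin K)).card : ℝ) * ((P.card : ℕ) : ℝ)) = N := by
    rw [hN, hP, Finset.card_powersetCard, Finset.card_univ, Fintype.card_fin,
      Finset.card_univ, Fintype.card_fin]
  have h2 := sum2_norm_sub_mean_le (Finset.univ : Finset (Fin K)) P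
      (fun j U => x - γ • restr b U (G j x - α j + A)) x
  rw [hNeq] at h2
  -- Step 2: bound on the sum of squared gradients estimates.
  have hgrad : ∀ j, ‖G j x - G j xstar‖ ^ 2
      ≤ 2 * L * (φ j x - φ j xstar - ⟪G j xstar, x - xstar⟫) :=
    fun j => grad_sq_le hL (φ j) (G j) (hconv j) (hsmooth j) x xstar
  have ha : ∑ j, ‖G j x - G j xstar‖ ^ 2
      ≤ 2 * L * (∑ j, φ j x - ∑ j, φ j xstar) := by
    calc ∑ j, ‖G j x - G j xstar‖ ^ 2
        ≤ ∑ j, 2 * L * (φ j x - φ j xstar - ⟪G j xstar, x - xstar⟫) :=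
          Finset.sum_le_sum fun j _ => hgrad j
      _ = 2 * L * (∑ j, φ j x - ∑ j, φ j xstar - ⟪∑ j, G j xstar, x - xstar⟫) := by
          rw [← Finset.mul_sum, Finset.sum_sub_distrib, Finset.sum_sub_distrib, sum_inner]
      _ = 2 * L * (∑ j, φ j x - ∑ j, φ j xstar) := by
          rw [hopt, inner_zero_left]; ring
  have hb : ∑ j, ‖(G j xstar - α j) + A‖ ^ 2 ≤ ∑ j, ‖α j - G j xstar‖ ^ 2 := by
    have hmeanc : (((Finset.univ : Finset (Fin K)).card : ℝ))⁻¹ • ∑ k, (G k xstar - α k)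
        = -A := by
      rw [Finset.sum_sub_distrib, hopt, zero_sub, smul_neg, hA, Finset.card_univ,
        Fintype.card_fin]
    have hmm := sum_norm_sub_mean_le (Finset.univ : Finset (Fin K))
      (fun k => G k xstar - α k)
    rw [hmeanc] at hmm
    calc ∑ j, ‖(G j xstar - α j) + A‖ ^ 2
        = ∑ j, ‖(G j xstar - α j) - (-A)‖ ^ 2 := by
          apply Finset.sum_congr rfl; intro j _; rw [sub_neg_eq_add]
      _ ≤ ∑ j, ‖G j xstar - α j‖ ^ 2 := hmm
      _ = ∑ j, ‖α j - G j xstar‖ ^ 2 := by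
          apply Finset.sum_congr rfl; intro j _; rw [norm_sub_rev]
  have hbound : ∑ j, ‖G j x - α j + A‖ ^ 2
      ≤ 2 * (2 * L * (∑ j, φ j x - ∑ j, φ j xstar)) + 2 * ∑ j, ‖α j - G j xstar‖ ^ 2 := by
    have h1 : ∀ j, ‖G j x - α j + A‖ ^ 2
        ≤ 2 * ‖G j x - G j xstar‖ ^ 2 + 2 * ‖(G j xstar - α j) + A‖ ^ 2 := by
      intro j
      have hsplit : G j x - α j + A = (G j x - G j xstar) + ((G j xstar - α j) + A) := by
        abel
      rw [hsplit]
      exact norm_add_sq_le_two _ _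
    calc ∑ j, ‖G j x - α j + A‖ ^ 2
        ≤ ∑ j, (2 * ‖G j x - G j xstar‖ ^ 2 + 2 * ‖(G j xstar - α j) + A‖ ^ 2) :=
          Finset.sum_le_sum fun j _ => h1 j
      _ = 2 * ∑ j, ‖G j x - G j xstar‖ ^ 2 + 2 * ∑ j, ‖(G j xstar - α j) + A‖ ^ 2 := by
          rw [Finset.sum_add_distrib, ← Finset.mul_sum, ← Finset.mul_sum]
      _ ≤ 2 * (2 * L * (∑ j, φ j x - ∑ j, φ j xstar)) + 2 * ∑ j, ‖α j - G j xstar‖ ^ 2 := by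
          linarith
  -- the combinatorial coefficient identity
  have hnat : m * (m - 1).choose (kb - 1) = m.choose kb * kb := by
    obtain ⟨m', rfl⟩ : ∃ m', m = m' + 1 := ⟨m - 1, by omega⟩
    obtain ⟨kb', rfl⟩ : ∃ kb', kb = kb' + 1 := ⟨kb - 1, by omega⟩
    simpa using Nat.add_one_mul_choose_eq m' kb'
  have hkey : N⁻¹ * ((m - 1).choose (kb - 1) : ℝ) = τ * (K : ℝ)⁻¹ := by
    have hcast : (m : ℝ) * ((m - 1).choose (kb - 1) : ℝ) = (m.choose kb : ℝ) * kb := by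
      exact_mod_cast hnat
    rw [hN, hτ]
    field_simp
    linear_combination hcast
  -- assemble
  calc N⁻¹ * ∑ j, ∑ U ∈ P,
        ‖(x - γ • restr b U (G j x - α j + A))
          - N⁻¹ • ∑ j'', ∑ U' ∈ P, (x - γ • restr b U' (G j'' x - α j'' + A))‖ ^ 2
      ≤ N⁻¹ * ∑ j, ∑ U ∈ P, ‖(x - γ • restr b U (G j x - α j + A)) - x‖ ^ 2 :=
        mul_le_mul_of_nonneg_left h2 (inv_nonneg.mpr hNpos.le)
    _ = N⁻¹ * (γ ^ 2 * (((m - 1).choose (kb - 1) : ℝ) * ∑ j, ‖G j x - α j + A‖ ^ 2)) := by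
        congr 1
        calc ∑ j, ∑ U ∈ P, ‖(x - γ • restr b U (G j x - α j + A)) - x‖ ^ 2
            = ∑ j, γ ^ 2 * (((m - 1).choose (kb - 1) : ℝ) * ‖G j x - α j + A‖ ^ 2) := by
              apply Finset.sum_congr rfl
              intro j _
              have hterm : ∀ U ∈ P, ‖(x - γ • restr b U (G j x - α j + A)) - x‖ ^ 2
                  = γ ^ 2 * ‖restr b U (G j x - α j + A)‖ ^ 2 := by
                intro U _
                rw [sub_sub_cancel_left, norm_neg, norm_smul, mul_pow, Real.norm_eq_abs,
                  sq_abs]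
              rw [Finset.sum_congr rfl hterm, ← Finset.mul_sum, hP,
                sum_restr_sq hkb b (G j x - α j + A)]
          _ = γ ^ 2 * (((m - 1).choose (kb - 1) : ℝ) * ∑ j, ‖G j x - α j + A‖ ^ 2) := by
              rw [← Finset.mul_sum, ← Finset.mul_sum]
    _ ≤ N⁻¹ * (γ ^ 2 * (((m - 1).choose (kb - 1) : ℝ) *
          (2 * (2 * L * (∑ j, φ j x - ∑ j, φ j xstar))
            + 2 * ∑ j, ‖α j - G j xstar‖ ^ 2))) := by
        apply mul_le_mul_of_nonneg_left _ (inv_nonneg.mpr hNpos.le)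
        apply mul_le_mul_of_nonneg_left _ (sq_nonneg γ)
        exact mul_le_mul_of_nonneg_left hbound (by positivity)
    _ = 2 * γ ^ 2 * τ *
          (2 * L * ((K : ℝ)⁻¹ * ∑ j, φ j x - (K : ℝ)⁻¹ * ∑ j, φ j xstar)
            + (K : ℝ)⁻¹ * ∑ j, ‖α j - G j xstar‖ ^ 2) := by
        have : N⁻¹ * (γ ^ 2 * (((m - 1).choose (kb - 1) : ℝ) * (2 * (2 * L *
            (∑ j, φ j x - ∑ j, φ j xstar)) + 2 * ∑ j, ‖α j - G j xstar‖ ^ 2)))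
            = (N⁻¹ * ((m - 1).choose (kb - 1) : ℝ)) * (γ ^ 2 * (2 * (2 * L *
            (∑ j, φ j x - ∑ j, φ j xstar)) + 2 * ∑ j, ‖α j - G j xstar‖ ^ 2)) := by
          ring
        rw [this, hkey]
        ring
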